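/- Let {R_α : α ∈ S} be a family of commutative rings and R = ∏_{α∈S} R_α the product ring. Then R is a PW-ring if and only if each R_α is a PW-ring. -/
import Mathlib


/-- `R` is a PW-ring: for all `a b` with `aR ⊓ bR = 0`, `Ann(a) + Ann(b)` contains a
regular element (non-zerodivisor). -/
def IsPWRing (R : Type*) [CommRing R] : Prop :=
  ∀ a b : R, Ideal.span {a} ⊓ Ideal.span {b} = ⊥ →
    ∃ x y : R, x * a = 0 ∧ y * b = 0 ∧ (∀ z : R, (x + y) * z = 0 → z = 0)

open Classical in
lemma pw_pi_dvd_iff {S : Type*} {R : S → Type*} [∀ α, CommRing (R α)]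
    (a f : ∀ α, R α) : a ∣ f ↔ ∀ α, a α ∣ f α := by
  constructor
  · rintro ⟨c, rfl⟩ α; exact ⟨c α, rfl⟩
  · intro h
    choose c hc using h
    exact ⟨c, funext hc⟩

open Classical in
/-- A product of commutative rings is a PW-ring iff each factor is. -/
theorem stmt2 {S : Type*} (R : S → Type*) [∀ α, CommRing (R α)] :
    IsPWRing (∀ α, R α) ↔ ∀ α, IsPWRing (R α) := by
  constructor
  · intro hPW α0 a b hab
    set A : ∀ α, R α := Function.update (0 : ∀ α, R α) α0 a with hA
    set B : ∀ α, R α := Function.update (0 : ∀ α, R α) α0 b with hB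
    have hspan : Ideal.span {A} ⊓ Ideal.span {B} = ⊥ := by
      rw [Submodule.eq_bot_iff]
      intro z hz
      rw [Ideal.mem_inf, Ideal.mem_span_singleton, Ideal.mem_span_singleton,
        pw_pi_dvd_iff, pw_pi_dvd_iff] at hz
      funext β
      by_cases hβ : β = α0
      · subst hβ
        have h1 : a ∣ z β := by simpa [hA, Function.update_self] using hz.1 β
        have h2 : b ∣ z β := by simpa [hB, Function.update_self] using hz.2 β
        have : z β ∈ Ideal.span {a} ⊓ Ideal.span {b} := by
          rw [Ideal.mem_inf, Ideal.mem_span_singleton, Ideal.mem_span_singleton]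
          exact ⟨h1, h2⟩
        rw [hab] at this
        simpa using this
      · have h1 : A β ∣ z β := hz.1 β
        rw [hA, Function.update_of_ne hβ] at h1
        have := (zero_dvd_iff).mp h1
        simpa using this
    obtain ⟨x, y, hx, hy, hreg⟩ := hPW A B hspan
    refine ⟨x α0, y α0, ?_, ?_, ?_⟩
    · have := congrFun hx α0
      simpa [hA, Function.update_self] using this
    · have := congrFun hy α0
      simpa [hB, Function.update_self] using this
    · intro z hz
      set Z : ∀ α, R α := Function.update (0 : ∀ α, R α) α0 z with hZ
      have : (x + y) * Z = 0 := by
        funext β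
        by_cases hβ : β = α0
        · subst hβ
          simpa [hZ, Function.update_self] using hz
        · simp [hZ, Function.update_of_ne hβ]
      have hZ0 := hreg Z this
      have := congrFun hZ0 α0
      simpa [hZ, Function.update_self] using this
  · intro h A B hAB
    have hspec : ∀ α, Ideal.span {A α} ⊓ Ideal.span {B α} = ⊥ := by
      intro α
      rw [Submodule.eq_bot_iff]
      intro z hz
      rw [Ideal.mem_inf, Ideal.mem_span_singleton, Ideal.mem_span_singleton] at hz
      set Z : ∀ β, R β := Function.update (0 : ∀ β, R β) α z with hZ
      have hAZ : A ∣ Z := by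
        rw [pw_pi_dvd_iff]
        intro β
        by_cases hβ : β = α
        · subst hβ; simpa [hZ, Function.update_self] using hz.1
        · simp [hZ, Function.update_of_ne hβ]
      have hBZ : B ∣ Z := by
        rw [pw_pi_dvd_iff]
        intro β
        by_cases hβ : β = α
        · subst hβ; simpa [hZ, Function.update_self] using hz.2
        · simp [hZ, Function.update_of_ne hβ]
      have : Z ∈ Ideal.span {A} ⊓ Ideal.span {B} := by
        rw [Ideal.mem_inf, Ideal.mem_span_singleton, Ideal.mem_span_singleton]
        exact ⟨hAZ, hBZ⟩
      rw [hAB] at this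
      have hZ0 : Z = 0 := by simpa using this
      have := congrFun hZ0 α
      simpa [hZ, Function.update_self] using this
    choose x y hx hy hreg using fun α => h α (A α) (B α) (hspec α)
    refine ⟨x, y, funext hx, funext hy, ?_⟩
    intro z hz
    funext α
    have := congrFun hz α
    exact hreg α (z α) this
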